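/- Let G be a finite connected simple graph containing no cycle of even length, and let H be a finite connected simple graph. Then the following are equivalent: (1) there exists a function ε : V(G) → {+, −} such that the ε-subgraph G_ε contains a subgraph isomorphic to H; (2) H is isomorphic to a subtree of G. -/

import Mathlib

/-- The ε-subgraph of `G`: the spanning subgraph whose edges are the edges of `G`
whose two endpoints receive different values under `ε`. -/
def epsSubgraph {V : Type*} (G : SimpleGraph V) (ε : V → Bool) : SimpleGraph V where
  Adj u v := G.Adj u v ∧ ε u ≠ ε v
  symm := ⟨fun _ _ h => ⟨h.1.symm, h.2.symm⟩⟩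
  loopless := ⟨fun v h => G.loopless.irrefl v h.1⟩

/-- `G` contains a subgraph isomorphic to `H`, i.e. there is an injective graph
homomorphism from `H` to `G`. -/
def ContainsCopy {V W : Type*} (G : SimpleGraph V) (H : SimpleGraph W) : Prop :=
  ∃ f : H →g G, Function.Injective f

/-- In a graph all of whose edges join vertices of different `ε`-values, a walk has
even length iff its endpoints have the same `ε`-value. -/
lemma eps_parity {α : Type*} {G' : SimpleGraph α} {ε : α → Bool}
    (h : ∀ a b, G'.Adj a b → ε a ≠ ε b) {u v : α} (w : G'.Walk u v) :
    (ε u = ε v) ↔ Even w.length := by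
  induction w with
  | nil => simp
  | @cons u x v hadj p ih =>
    have hne := h _ _ hadj
    rw [SimpleGraph.Walk.length_cons, Nat.even_add_one, ← ih]
    cases hu : ε u <;> cases hx : ε x <;> cases hv : ε v <;> simp_all

theorem stmt1 {V W : Type*} [Fintype V] [Fintype W] (G : SimpleGraph V)
    (hG : G.Connected)
    (hNoEven : ∀ (v : V) (w : G.Walk v v), w.IsCycle → ¬ Even w.length)
    (H : SimpleGraph W) (hH : H.Connected) :
    (∃ ε : V → Bool, ContainsCopy (epsSubgraph G ε) H) ↔
      ∃ T : G.Subgraph, T.Connected ∧ T.coe.IsAcyclic ∧ Nonempty (H ≃g T.coe) := by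
  classical
  constructor
  · rintro ⟨ε, f, hf⟩
    let T : G.Subgraph :=
      { verts := Set.range (fun w => (f w : V))
        Adj := fun x y => ∃ a b, H.Adj a b ∧ f a = x ∧ f b = y
        adj_sub := by rintro x y ⟨a, b, hab, rfl, rfl⟩; exact (f.map_adj hab).1
        edge_vert := by rintro x y ⟨a, b, hab, rfl, rfl⟩; exact ⟨a, rfl⟩
        symm := ⟨by rintro x y ⟨a, b, hab, rfl, rfl⟩; exact ⟨b, a, hab.symm, rfl, rfl⟩⟩ }
    have hTadj : ∀ x y : T.verts, T.coe.Adj x y ↔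
        ∃ a b, H.Adj a b ∧ f a = (x : V) ∧ f b = (y : V) := fun _ _ => Iff.rfl
    let e : H ≃g T.coe :=
      { toEquiv := Equiv.ofInjective (fun w => (f w : V)) hf
        map_rel_iff' := by
          intro a b
          rw [hTadj]
          constructor
          · rintro ⟨a', b', hab, ha, hb⟩
            replace ha : f a' = f a := ha
            replace hb : f b' = f b := hb
            rwa [hf ha, hf hb] at hab
          · intro hab
            exact ⟨a, b, hab, rfl, rfl⟩ }
    have hdiff : ∀ a b : T.verts, T.coe.Adj a b → ε (a : V) ≠ ε (b : V) := by
      rintro a b ⟨a', b', hab, ha, hb⟩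
      have := (f.map_adj hab).2
      rwa [ha, hb] at this
    have hacy : T.coe.IsAcyclic := by
      intro x c hc
      have heven : Even c.length := (eps_parity hdiff c).mp rfl
      have hcyc : (c.map T.hom).IsCycle :=
        (SimpleGraph.Walk.map_isCycle_iff_of_injective Subtype.val_injective).mpr hc
      exact hNoEven (x : V) (c.map T.hom) hcyc (by convert heven using 1; exact SimpleGraph.Walk.length_map _ _)
    exact ⟨T, SimpleGraph.Subgraph.connected_iff'.mpr (e.connected_iff.mp hH), hacy, ⟨e⟩⟩
  · rintro ⟨T, hTconn, hTacy, ⟨e⟩⟩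
    have hconn : T.coe.Connected := hTconn.coe
    obtain ⟨r⟩ : Nonempty T.verts := hconn.nonempty
    let P : ∀ x : T.verts, T.coe.Path r x := fun x => (hconn.preconnected r x).some.toPath
    let ε : V → Bool := fun v =>
      if h : v ∈ T.verts then ((P ⟨v, h⟩ : T.coe.Walk r ⟨v, h⟩).length % 2 == 1) else false
    have key : ∀ x y : T.verts, T.coe.Adj x y →
        ((P x : T.coe.Walk r x).length % 2) ≠ ((P y : T.coe.Walk r y).length % 2) := by
      intro x y hadj
      set p := P x with hp
      set q := P y with hq
      by_cases hy : y ∈ (p : T.coe.Walk r x).support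
      · -- q is the prefix of p up to y, and p continues by one edge to x
        have htake : q = ⟨(p : T.coe.Walk r x).takeUntil y hy, p.2.takeUntil hy⟩ :=
          hTacy.path_unique _ _
        have hdrop : (⟨(p : T.coe.Walk r x).dropUntil y hy, p.2.dropUntil hy⟩ : T.coe.Path y x)
            = SimpleGraph.Path.singleton hadj.symm := hTacy.path_unique _ _
        have hlen1 : ((p : T.coe.Walk r x).dropUntil y hy).length = 1 := by
          have := congrArg (fun z : T.coe.Path y x => (z : T.coe.Walk y x).length) hdrop
          simpa [SimpleGraph.Path.singleton] using this
        have hsum : ((p : T.coe.Walk r x).takeUntil y hy).length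
            + ((p : T.coe.Walk r x).dropUntil y hy).length
            = (p : T.coe.Walk r x).length := by
          rw [← SimpleGraph.Walk.length_append, SimpleGraph.Walk.take_spec]
        have hqlen : (q : T.coe.Walk r y).length
            = ((p : T.coe.Walk r x).takeUntil y hy).length := by
          rw [htake]
        omega
      · -- p extended by the edge x~y is a path, hence equals q
        have hpath : ((p : T.coe.Walk r x).concat hadj).IsPath := by
          rw [SimpleGraph.Walk.isPath_def, SimpleGraph.Walk.support_concat]
          have := p.2.support_nodup
          simp [List.concat_eq_append, List.nodup_append, this, hy]
          intro a b hab h; exact hy (h ▸ hab)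
        have hcat : q = ⟨(p : T.coe.Walk r x).concat hadj, hpath⟩ := hTacy.path_unique _ _
        have hqlen : (q : T.coe.Walk r y).length = (p : T.coe.Walk r x).length + 1 := by
          rw [hcat]; exact SimpleGraph.Walk.length_concat _ _
        omega
    refine ⟨ε, ⟨⟨fun w => ((e w : T.verts) : V), ?_⟩, ?_⟩⟩
    · intro a b hab
      have hadj : T.coe.Adj (e a) (e b) := e.map_rel_iff.mpr hab
      refine ⟨T.adj_sub hadj, ?_⟩
      have hk := key (e a) (e b) hadj
      have hεa : ε ((e a : T.verts) : V)
          = ((P (e a) : T.coe.Walk r (e a)).length % 2 == 1) := by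
        simp only [ε, dif_pos (e a : T.verts).2]
      have hεb : ε ((e b : T.verts) : V)
          = ((P (e b) : T.coe.Walk r (e b)).length % 2 == 1) := by
        simp only [ε, dif_pos (e b : T.verts).2]
      rw [hεa, hεb]
      rcases Nat.mod_two_eq_zero_or_one (P (e a) : T.coe.Walk r (e a)).length with h1 | h1 <;>
        rcases Nat.mod_two_eq_zero_or_one (P (e b) : T.coe.Walk r (e b)).length with h2 | h2 <;>
          simp_all
    · intro a b hab
      exact e.injective (Subtype.val_injective hab)
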